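/- Let Λ ⊆ ℝ be not contained in an arithmetic progression and θ ∈ ℝ. If F, H are entire functions with |F(z)| = |H(z)| for all z ∈ e^{iθ}(ℝ + iΛ), then there exists τ ∈ ℂ with |τ| = 1 and F = τH. -/

import Mathlib

open Complex Filter Topology

local notation "conj'" => starRingEnd ℂ

/-- If `f` is entire, then `z ↦ conj (f (conj z))` is entire. -/
lemma pr_conj_entire {f : ℂ → ℂ} (hf : Differentiable ℂ f) :
    Differentiable ℂ (fun z => conj' (f (conj' z))) := by
  intro z
  have h := (hf (conj' z)).hasDerivAt
  rw [hasDerivAt_iff_tendsto_slope] at h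
  have hconj : Tendsto (fun w : ℂ => conj' w) (𝓝[≠] z) (𝓝[≠] (conj' z)) := by
    apply tendsto_nhdsWithin_of_tendsto_nhds_of_eventually_within
    · exact (Complex.continuous_conj.tendsto z).mono_left nhdsWithin_le_nhds
    · filter_upwards [self_mem_nhdsWithin] with w hw
      simpa using fun hc => hw ((starRingEnd ℂ).injective (by simpa using hc))
  have h2 : Tendsto (fun w => conj' (slope f (conj' z) (conj' w))) (𝓝[≠] z)
      (𝓝 (conj' (deriv f (conj' z)))) :=
    (Complex.continuous_conj.tendsto _).comp (h.comp hconj)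
  have : HasDerivAt (fun w => conj' (f (conj' w))) (conj' (deriv f (conj' z))) z := by
    rw [hasDerivAt_iff_tendsto_slope]
    refine h2.congr fun w => ?_
    simp only [slope_def_field, map_div₀, map_sub]
    simp
  exact this.differentiableAt

/-- Identity theorem: two entire functions agreeing on a real line coincide. -/
lemma pr_eq_on_line {f g : ℂ → ℂ} (hf : Differentiable ℂ f) (hg : Differentiable ℂ g)
    {c z₀ : ℂ} (hc : c ≠ 0) (h : ∀ t : ℝ, f (z₀ + c * t) = g (z₀ + c * t)) :
    ∀ z, f z = g z := by
  have hfa : AnalyticOnNhd ℂ f Set.univ :=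
    Complex.analyticOnNhd_univ_iff_differentiable.2 hf
  have hga : AnalyticOnNhd ℂ g Set.univ :=
    Complex.analyticOnNhd_univ_iff_differentiable.2 hg
  have hu : Tendsto (fun n : ℕ => z₀ + c * (1 / (n + 1) : ℝ)) atTop (𝓝[≠] z₀) := by
    apply tendsto_nhdsWithin_of_tendsto_nhds_of_eventually_within
    · have : Tendsto (fun n : ℕ => ((1 / (n + 1) : ℝ) : ℂ)) atTop (𝓝 0) := by
        rw [show ((0:ℂ) = ((0:ℝ):ℂ)) by norm_num]
        exact (Complex.continuous_ofReal.tendsto 0).comp tendsto_one_div_add_atTop_nhds_zero_nat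
      have := (this.const_mul c).const_add z₀
      simpa using this
    · filter_upwards with n
      simp only [Set.mem_compl_iff, Set.mem_singleton_iff, add_eq_left, mul_eq_zero]
      push_neg
      refine ⟨hc, ?_⟩
      exact_mod_cast one_div_ne_zero (by positivity : ((n:ℝ) + 1) ≠ 0)
  have hfreq : ∃ᶠ z in 𝓝[≠] z₀, f z = g z :=
    hu.frequently (Frequently.of_forall fun n => h _)
  exact fun z => congrFun (hfa.eq_of_frequently_eq hga hfreq) z

/-- Cancellation: if `f * k = g * k` with `k` entire nonvanishing at a point, `f = g`. -/
lemma pr_cancel {f g k : ℂ → ℂ} (hf : Differentiable ℂ f) (hg : Differentiable ℂ g)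
    (hk : Differentiable ℂ k) {z₀ : ℂ} (hk0 : k z₀ ≠ 0)
    (h : ∀ z, f z * k z = g z * k z) : ∀ z, f z = g z := by
  have hfa : AnalyticOnNhd ℂ f Set.univ :=
    Complex.analyticOnNhd_univ_iff_differentiable.2 hf
  have hga : AnalyticOnNhd ℂ g Set.univ :=
    Complex.analyticOnNhd_univ_iff_differentiable.2 hg
  have hev : ∀ᶠ z in 𝓝 z₀, f z = g z := by
    filter_upwards [hk.continuous.continuousAt.eventually_ne hk0] with z hz
    exact mul_right_cancel₀ hz (h z)
  have hfreq : ∃ᶠ z in 𝓝[≠] z₀, f z = g z :=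
    (hev.filter_mono nhdsWithin_le_nhds).frequently
  exact fun z => congrFun (hfa.eq_of_frequently_eq hga hfreq) z

theorem phase_retrieval_sufficiency (Λ : Set ℝ)
    (hΛ : ¬ ∃ a b : ℝ, Λ ⊆ {r : ℝ | ∃ n : ℤ, r = a * n + b})
    (θ : ℝ) (F H : ℂ → ℂ) (hF : Differentiable ℂ F) (hH : Differentiable ℂ H)
    (hmod : ∀ (t : ℝ), ∀ l ∈ Λ,
      ‖F (Complex.exp (Complex.I * θ) * ((t : ℂ) + Complex.I * l))‖
        = ‖H (Complex.exp (Complex.I * θ) * ((t : ℂ) + Complex.I * l))‖) :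
    ∃ τ : ℂ, ‖τ‖ = 1 ∧ ∀ z : ℂ, F z = τ * H z := by
  set e : ℂ := Complex.exp (Complex.I * θ) with he
  have he0 : e ≠ 0 := Complex.exp_ne_zero _
  have hee : e * conj' e = 1 := by
    rw [he, ← Complex.exp_conj, ← Complex.exp_add]
    simp [Complex.conj_ofReal]
  -- nonempty Λ
  have hne : Λ.Nonempty := by
    by_contra h
    exact hΛ ⟨0, 0, by simp [Set.not_nonempty_iff_eq_empty.1 h]⟩
  obtain ⟨l₀, hl₀⟩ := hne
  by_cases h0 : ∀ t : ℝ, H (e * ((t : ℂ) + Complex.I * l₀)) = 0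
  · -- H vanishes on a line: both functions are identically zero
    have hH0 : ∀ z, H z = 0 := by
      refine pr_eq_on_line hH (differentiable_const 0) he0 (z₀ := e * (Complex.I * l₀)) ?_
      intro t
      rw [show e * (Complex.I * (l₀:ℂ)) + e * t = e * ((t:ℂ) + Complex.I * l₀) by ring]
      exact h0 t
    have hF0 : ∀ z, F z = 0 := by
      refine pr_eq_on_line hF (differentiable_const 0) he0 (z₀ := e * (Complex.I * l₀)) ?_
      intro t
      rw [show e * (Complex.I * (l₀:ℂ)) + e * t = e * ((t:ℂ) + Complex.I * l₀) by ring]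
      have := hmod t l₀ hl₀
      rw [h0 t] at this
      simpa using this
    exact ⟨1, by simp, fun z => by simp [hF0 z, hH0 z]⟩
  · push_neg at h0
    obtain ⟨t₀, hHp⟩ := h0
    set p : ℂ := e * ((t₀ : ℂ) + Complex.I * l₀) with hp
    have hFp : F p ≠ 0 := by
      intro h
      apply hHp
      have := hmod t₀ l₀ hl₀
      rw [← hp, h] at this
      simpa using this.symm
    -- differentiability of the reflected functions
    have hrefl : ∀ (f : ℂ → ℂ), Differentiable ℂ f → ∀ c : ℂ,
        Differentiable ℂ (fun z => conj' (f (e^2 * conj' z + c))) := by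
      intro f hf c
      have : (fun z => conj' (f (e^2 * conj' z + c)))
          = fun z => conj' (f (conj' (conj' (e^2) * z + conj' c))) := by
        funext z; congr 1; congr 1; simp
      rw [this]
      exact (pr_conj_entire hf).comp ((differentiable_id.const_mul _).add_const _)
    -- Step 1: F z * conj F(σ_l z) = H z * conj H(σ_l z)
    have key1 : ∀ l ∈ Λ, ∀ z,
        F z * conj' (F (e^2 * conj' z + 2 * Complex.I * e * l))
          = H z * conj' (H (e^2 * conj' z + 2 * Complex.I * e * l)) := by
      intro l hl
      refine pr_eq_on_line (hF.mul (hrefl F hF _)) (hH.mul (hrefl H hH _))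
        he0 (z₀ := e * (Complex.I * l)) ?_
      intro t
      have hpt : e * (Complex.I * (l:ℂ)) + e * t = e * ((t:ℂ) + Complex.I * l) := by ring
      have hcz : conj' (e * ((t:ℂ) + Complex.I * l)) = conj' e * ((t:ℂ) - Complex.I * l) := by
        rw [map_mul, map_add, map_mul, Complex.conj_I, Complex.conj_ofReal, Complex.conj_ofReal]
        ring
      have hfix : e^2 * conj' (e * ((t:ℂ) + Complex.I * l)) + 2 * Complex.I * e * l
          = e * ((t:ℂ) + Complex.I * l) := by
        rw [hcz]
        linear_combination (e * ((t:ℂ) - Complex.I * l)) * hee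
      rw [hpt, hfix]
      rw [Complex.mul_conj, Complex.mul_conj]
      norm_cast
      rw [Complex.normSq_eq_norm_sq, Complex.normSq_eq_norm_sq, hmod t l hl]
    -- Step 2: cross identity for the reflected functions
    have key2 : ∀ l ∈ Λ, ∀ m ∈ Λ, ∀ z,
        conj' (F (e^2 * conj' z + 2 * Complex.I * e * l))
          * conj' (H (e^2 * conj' z + 2 * Complex.I * e * m))
        = conj' (F (e^2 * conj' z + 2 * Complex.I * e * m))
          * conj' (H (e^2 * conj' z + 2 * Complex.I * e * l)) := by
      intro l hl m hm
      have step1 : ∀ z,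
          (conj' (F (e^2 * conj' z + 2 * Complex.I * e * l))
            * conj' (H (e^2 * conj' z + 2 * Complex.I * e * m)) * H z) * F z
          = (conj' (F (e^2 * conj' z + 2 * Complex.I * e * m))
            * conj' (H (e^2 * conj' z + 2 * Complex.I * e * l)) * H z) * F z := by
        intro z
        linear_combination (conj' (H (e^2 * conj' z + 2 * Complex.I * e * m)) * H z) * key1 l hl z
          - (conj' (H (e^2 * conj' z + 2 * Complex.I * e * l)) * H z) * (key1 m hm z)
      have step2 := pr_cancel (((hrefl F hF _).mul (hrefl H hH _)).mul hH)
        (((hrefl F hF _).mul (hrefl H hH _)).mul hH) hF hFp step1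
      exact pr_cancel ((hrefl F hF _).mul (hrefl H hH _))
        ((hrefl F hF _).mul (hrefl H hH _)) hH hHp step2
    -- Step 3: quasi-periods
    have key3 : ∀ l ∈ Λ, ∀ m ∈ Λ, ∀ u : ℂ,
        F u * H (u + 2 * Complex.I * e * ((m : ℂ) - l))
          = F (u + 2 * Complex.I * e * ((m : ℂ) - l)) * H u := by
      intro l hl m hm u
      have h := key2 l hl m hm (conj' ((u - 2 * Complex.I * e * l) / e^2))
      rw [Complex.conj_conj] at h
      rw [show e^2 * ((u - 2 * Complex.I * e * (l:ℂ)) / e^2) + 2 * Complex.I * e * l = u by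
        field_simp; ring] at h
      rw [show e^2 * ((u - 2 * Complex.I * e * (l:ℂ)) / e^2) + 2 * Complex.I * e * m
          = u + 2 * Complex.I * e * ((m:ℂ) - l) by field_simp; ring] at h
      have := congrArg conj' h
      simpa [map_mul, Complex.conj_conj] using this
    -- Step 4: closed subgroup of quasi-periods
    set S : AddSubgroup ℝ :=
      { carrier := {s : ℝ | ∀ w : ℂ, F w * H (w + 2 * Complex.I * e * (s : ℂ))
          = F (w + 2 * Complex.I * e * (s : ℂ)) * H w}
        zero_mem' := by intro w; simp
        add_mem' := by
          intro a b ha hb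
          intro w
          push_cast
          have hb' := hb (w + 2 * Complex.I * e * (a : ℂ))
          rw [show w + 2 * Complex.I * e * (a:ℂ) + 2 * Complex.I * e * (b:ℂ)
              = w + 2 * Complex.I * e * ((a:ℂ) + b) by ring] at hb'
          have key : ∀ w : ℂ,
              (F w * H (w + 2 * Complex.I * e * ((a:ℂ) + b)))
                * (F (w + 2 * Complex.I * e * (a:ℂ)) * H (w + 2 * Complex.I * e * (a:ℂ)))
              = (F (w + 2 * Complex.I * e * ((a:ℂ) + b)) * H w)
                * (F (w + 2 * Complex.I * e * (a:ℂ)) * H (w + 2 * Complex.I * e * (a:ℂ))) := by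
            intro w
            have A := ha w
            have B := hb (w + 2 * Complex.I * e * (a : ℂ))
            rw [show w + 2 * Complex.I * e * (a:ℂ) + 2 * Complex.I * e * (b:ℂ)
                = w + 2 * Complex.I * e * ((a:ℂ) + b) by ring] at B
            linear_combination
              (H (w + 2 * Complex.I * e * (a:ℂ)) * F (w + 2 * Complex.I * e * ((a:ℂ) + b))) * A
              + (F w * H (w + 2 * Complex.I * e * (a:ℂ))) * B
          have hd : Differentiable ℂ (fun w : ℂ => w + 2 * Complex.I * e * ((a:ℂ) + b)) :=
            differentiable_id.add_const _
          have hd' : Differentiable ℂ (fun w : ℂ => w + 2 * Complex.I * e * (a:ℂ)) :=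
            differentiable_id.add_const _
          have hk0 : (fun w : ℂ => F (w + 2 * Complex.I * e * (a:ℂ))
              * H (w + 2 * Complex.I * e * (a:ℂ))) (p - 2 * Complex.I * e * (a:ℂ)) ≠ 0 := by
            simp only [sub_add_cancel]
            exact mul_ne_zero hFp hHp
          exact pr_cancel (hF.mul (hH.comp hd)) ((hF.comp hd).mul hH)
            ((hF.comp hd').mul (hH.comp hd')) hk0 key w
        neg_mem' := by
          intro a ha w
          push_cast
          have h := ha (w + 2 * Complex.I * e * (-(a:ℂ)))
          rw [show w + 2 * Complex.I * e * (-(a:ℂ)) + 2 * Complex.I * e * (a:ℂ) = w by ring] at h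
          linear_combination -h } with hS
    have hSmem : ∀ s : ℝ, s ∈ S ↔ ∀ w : ℂ, F w * H (w + 2 * Complex.I * e * (s : ℂ))
        = F (w + 2 * Complex.I * e * (s : ℂ)) * H w := fun s => Iff.rfl
    have hSclosed : IsClosed (S : Set ℝ) := by
      have : (S : Set ℝ) = ⋂ w : ℂ, {s : ℝ | F w * H (w + 2 * Complex.I * e * (s : ℂ))
          = F (w + 2 * Complex.I * e * (s : ℂ)) * H w} := by
        ext s
        simp only [Set.mem_iInter, Set.mem_setOf_eq]
        exact hSmem s
      rw [this]
      refine isClosed_iInter fun w => isClosed_eq ?_ ?_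
      · have hc : Continuous (fun s : ℝ => w + 2 * Complex.I * e * (s : ℂ)) :=
          continuous_const.add (continuous_const.mul Complex.continuous_ofReal)
        exact continuous_const.mul (hH.continuous.comp hc)
      · have hc : Continuous (fun s : ℝ => w + 2 * Complex.I * e * (s : ℂ)) :=
          continuous_const.add (continuous_const.mul Complex.continuous_ofReal)
        exact (hF.continuous.comp hc).mul continuous_const
    -- the difference set generates a subgroup contained in S
    set D : Set ℝ := {d : ℝ | ∃ l ∈ Λ, ∃ m ∈ Λ, d = m - l} with hD
    have hDS : AddSubgroup.closure D ≤ S := by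
      rw [AddSubgroup.closure_le]
      rintro d ⟨l, hl, m, hm, rfl⟩
      rw [SetLike.mem_coe, hSmem]
      intro w
      push_cast
      exact key3 l hl m hm w
    have hall : ∀ s : ℝ, s ∈ S := by
      rcases AddSubgroup.dense_or_cyclic (AddSubgroup.closure D) with hdense | ⟨a, hcyc⟩
      · intro s
        have h1 : ((AddSubgroup.closure D : AddSubgroup ℝ) : Set ℝ) ⊆ (S : Set ℝ) := hDS
        have h2 : closure ((AddSubgroup.closure D : AddSubgroup ℝ) : Set ℝ) ⊆ (S : Set ℝ) := by
          calc closure ((AddSubgroup.closure D : AddSubgroup ℝ) : Set ℝ)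
              ⊆ closure (S : Set ℝ) := closure_mono h1
            _ = (S : Set ℝ) := hSclosed.closure_eq
        have := hdense.closure_eq
        rw [this] at h2
        exact h2 (Set.mem_univ s)
      · exfalso
        apply hΛ
        refine ⟨a, l₀, fun l hl => ?_⟩
        have hmem : l - l₀ ∈ AddSubgroup.closure D :=
          AddSubgroup.subset_closure ⟨l₀, hl₀, l, hl, rfl⟩
        rw [hcyc, AddSubgroup.mem_closure_singleton] at hmem
        obtain ⟨n, hn⟩ := hmem
        exact ⟨n, by rw [zsmul_eq_mul] at hn; linarith [hn]⟩
    -- Step 7: F w * H z = F z * H w for all w z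
    have hprop : ∀ w z : ℂ, F w * H z = F z * H w := by
      intro w z
      have hline := pr_eq_on_line (f := fun ζ => F w * H (w + ζ)) (g := fun ζ => F (w + ζ) * H w)
        ((hH.comp (differentiable_id.const_add w)).const_mul _)
        ((hF.comp (differentiable_id.const_add w)).mul_const _)
        (c := 2 * Complex.I * e) (z₀ := 0)
        (by simp [he0, Complex.I_ne_zero])
        (fun t => by simpa using hall t w)
      have := hline (z - w)
      simpa using this
    refine ⟨F p / H p, ?_, ?_⟩
    · rw [norm_div]
      rw [hp]
      rw [hmod t₀ l₀ hl₀]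
      exact div_self (by simpa [hp] using (norm_ne_zero_iff.mpr hHp))
    · intro z
      have := hprop p z
      rw [div_mul_eq_mul_div, eq_div_iff hHp]
      linear_combination -this
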